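/- In the presented group G = ⟨a, b, c ∣ a³, b³, c³, abc⟩, the subgroup N generated by the two elements a·b⁻¹ and a⁻¹·b is an abelian normal subgroup of G, and the quotient G/N is cyclic of order 3. -/

import Mathlib

/-- In `G = ⟨a, b, c ∣ a³, b³, c³, abc⟩`, the subgroup `N` generated by
`a·b⁻¹` and `a⁻¹·b` is an abelian normal subgroup and `G/N` is cyclic of order `3`
(expressed by a surjective homomorphism onto `ℤ/3ℤ` with kernel `N`). -/
theorem stmt_3 :
    let rels : Set (FreeGroup (Fin 3)) :=
      {FreeGroup.of 0 ^ 3, FreeGroup.of 1 ^ 3, FreeGroup.of 2 ^ 3,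
        FreeGroup.of 0 * FreeGroup.of 1 * FreeGroup.of 2}
    let a : PresentedGroup rels := PresentedGroup.of 0
    let b : PresentedGroup rels := PresentedGroup.of 1
    let N : Subgroup (PresentedGroup rels) := Subgroup.closure {a * b⁻¹, a⁻¹ * b}
    N.Normal ∧ (∀ x ∈ N, ∀ y ∈ N, x * y = y * x) ∧
      ∃ φ : PresentedGroup rels →* Multiplicative (ZMod 3),
        Function.Surjective φ ∧ φ.ker = N := by
  intro rels a b N
  have hrel : ∀ r ∈ rels, PresentedGroup.mk rels r = 1 := fun r hr =>
    (QuotientGroup.eq_one_iff r).mpr (Subgroup.subset_normalClosure hr)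
  have ha : a ^ 3 = 1 := by
    have h := hrel (FreeGroup.of 0 ^ 3) (Set.mem_insert _ _)
    rw [map_pow] at h
    exact h
  have hb : b ^ 3 = 1 := by
    have h := hrel (FreeGroup.of 1 ^ 3)
      (Set.mem_insert_of_mem _ (Set.mem_insert _ _))
    rw [map_pow] at h
    exact h
  have hc : (PresentedGroup.of (rels := rels) 2) ^ 3 = 1 := by
    have h := hrel (FreeGroup.of 2 ^ 3)
      (Set.mem_insert_of_mem _ (Set.mem_insert_of_mem _ (Set.mem_insert _ _)))
    rw [map_pow] at h
    exact h
  have habc : a * b * PresentedGroup.of (rels := rels) 2 = 1 := by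
    have h := hrel (FreeGroup.of 0 * FreeGroup.of 1 * FreeGroup.of 2)
      (Set.mem_insert_of_mem _ (Set.mem_insert_of_mem _ (Set.mem_insert_of_mem _ rfl)))
    rw [map_mul, map_mul] at h
    exact h
  have hc2 : (PresentedGroup.of (rels := rels) 2) = (a * b)⁻¹ :=
    eq_inv_of_mul_eq_one_right habc
  have hp : (a * b) ^ 3 = 1 := by
    have hab : a * b = (PresentedGroup.of (rels := rels) 2)⁻¹ :=
      eq_inv_of_mul_eq_one_left habc
    rw [hab, inv_pow, hc, inv_one]
  have hP : a * b * a * b * a * b = 1 := by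
    have h := hp
    rw [pow_succ, pow_succ, pow_one] at h
    rw [← h]
    simp only [mul_assoc]
  -- the two generators of N commute
  have comm : (a * b⁻¹) * (a⁻¹ * b) = (a⁻¹ * b) * (a * b⁻¹) := by
    have h : (a * b⁻¹) * (a⁻¹ * b) =
        ((a * b⁻¹ * a⁻¹ * b⁻¹) * b ^ 3 * (a * b⁻¹ * a⁻¹ * b⁻¹)⁻¹) *
          (a * (a * b * a * b * a * b)⁻¹ * a⁻¹) * a ^ 3 * ((a⁻¹ * b) * (a * b⁻¹)) := by
      group
      all_goals simp only [pow_two, zpow_two, mul_assoc]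
    rw [ha, hb, hP] at h
    rw [h]; group
    all_goals simp only [pow_two, zpow_two, mul_assoc]
  -- conjugation identities
  have c1 : a * (a * b⁻¹) * a⁻¹ = (a * b⁻¹)⁻¹ * (a⁻¹ * b) := by
    have h : a * (a * b⁻¹) * a⁻¹ = ((a * b⁻¹)⁻¹ * (a⁻¹ * b)) *
        ((b⁻¹ * a⁻¹) * a ^ 3 * (b⁻¹ * a⁻¹)⁻¹) *
        ((b⁻¹ * a⁻¹) * (b⁻¹ * a⁻¹) * a ^ 3 * ((b⁻¹ * a⁻¹) * (b⁻¹ * a⁻¹))⁻¹) *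
        (a * b * a * b * a * b)⁻¹ := by
      group
      all_goals simp only [pow_two, zpow_two, mul_assoc]
    rw [ha, hP] at h
    rw [h]; group
    all_goals simp only [pow_two, zpow_two, mul_assoc]
  have c2 : a * (a⁻¹ * b) * a⁻¹ = (a * b⁻¹)⁻¹ := by group
  have c3 : a⁻¹ * (a * b⁻¹) * a⁻¹⁻¹ = (a⁻¹ * b)⁻¹ := by group
  have c4 : a⁻¹ * (a⁻¹ * b) * a⁻¹⁻¹ = (a⁻¹ * b)⁻¹ * (a * b⁻¹) := by
    have h : a⁻¹ * (a⁻¹ * b) * a⁻¹⁻¹ = ((a⁻¹ * b)⁻¹ * (a * b⁻¹)) *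
        ((b * a) * (a ^ 3)⁻¹ * (b * a)⁻¹) *
        ((b * a) * (b * a) * (a ^ 3)⁻¹ * ((b * a) * (b * a))⁻¹) *
        (a⁻¹ * (a * b * a * b * a * b) * a) := by
      group
      all_goals simp only [pow_two, zpow_two, mul_assoc]
    rw [ha, hP] at h
    rw [h]; group
    all_goals simp only [pow_two, zpow_two, mul_assoc]
  have c5 : b * (a * b⁻¹) * b⁻¹ = (a * b⁻¹)⁻¹ * (a⁻¹ * b) := by
    have h : b * (a * b⁻¹) * b⁻¹ = ((a * b⁻¹)⁻¹ * (a⁻¹ * b)) *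
        (b⁻¹ * a ^ 3 * b) * (b ^ 3)⁻¹ := by
      group
      all_goals simp only [pow_two, zpow_two, mul_assoc]
    rw [ha, hb] at h
    rw [h]; group
    all_goals simp only [pow_two, zpow_two, mul_assoc]
  have c6 : b * (a⁻¹ * b) * b⁻¹ = (a * b⁻¹)⁻¹ := by group
  have c7 : b⁻¹ * (a * b⁻¹) * b⁻¹⁻¹ = (a⁻¹ * b)⁻¹ := by group
  have c8 : b⁻¹ * (a⁻¹ * b) * b⁻¹⁻¹ = (a⁻¹ * b)⁻¹ * (a * b⁻¹) := by
    have h : b⁻¹ * (a⁻¹ * b) * b⁻¹⁻¹ = ((a⁻¹ * b)⁻¹ * (a * b⁻¹)) *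
        (b * (a ^ 3)⁻¹ * b⁻¹) * b ^ 3 := by
      group
      all_goals simp only [pow_two, zpow_two, mul_assoc]
    rw [ha, hb] at h
    rw [h]; group
    all_goals simp only [pow_two, zpow_two, mul_assoc]
  have hx : a * b⁻¹ ∈ N := Subgroup.subset_closure (Set.mem_insert _ _)
  have hy : a⁻¹ * b ∈ N := Subgroup.subset_closure (Set.mem_insert_of_mem _ rfl)
  -- conjugation stability
  have conj : ∀ g : PresentedGroup rels,
      g * (a * b⁻¹) * g⁻¹ ∈ N → g * (a⁻¹ * b) * g⁻¹ ∈ N → ∀ n ∈ N, g * n * g⁻¹ ∈ N := by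
    intro g h1 h2 n hn
    induction hn using Subgroup.closure_induction with
    | mem z hz =>
      rcases hz with rfl | hz
      · exact h1
      · rw [Set.mem_singleton_iff] at hz
        subst hz; exact h2
    | one => simpa using one_mem N
    | mul p q hp' hq' ih1 ih2 =>
      have e : g * (p * q) * g⁻¹ = (g * p * g⁻¹) * (g * q * g⁻¹) := by group
      rw [e]; exact mul_mem ih1 ih2
    | inv p hp' ih =>
      have e : g * p⁻¹ * g⁻¹ = (g * p * g⁻¹)⁻¹ := by group
      rw [e]; exact inv_mem ih
  have hA : ∀ n ∈ N, a * n * a⁻¹ ∈ N :=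
    conj a (by rw [c1]; exact mul_mem (inv_mem hx) hy) (by rw [c2]; exact inv_mem hx)
  have hA' : ∀ n ∈ N, a⁻¹ * n * a⁻¹⁻¹ ∈ N :=
    conj a⁻¹ (by rw [c3]; exact inv_mem hy) (by rw [c4]; exact mul_mem (inv_mem hy) hx)
  have hB : ∀ n ∈ N, b * n * b⁻¹ ∈ N :=
    conj b (by rw [c5]; exact mul_mem (inv_mem hx) hy) (by rw [c6]; exact inv_mem hx)
  have hB' : ∀ n ∈ N, b⁻¹ * n * b⁻¹⁻¹ ∈ N :=
    conj b⁻¹ (by rw [c7]; exact inv_mem hy) (by rw [c8]; exact mul_mem (inv_mem hy) hx)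
  have hna : a ∈ Subgroup.normalizer (N : Set (PresentedGroup rels)) := by
    refine Subgroup.mem_normalizer_iff.mpr fun h => ⟨fun hh => hA h hh, fun hh => ?_⟩
    have h2 := hA' _ hh
    rwa [show a⁻¹ * (a * h * a⁻¹) * a⁻¹⁻¹ = h by group] at h2
  have hnb : b ∈ Subgroup.normalizer (N : Set (PresentedGroup rels)) := by
    refine Subgroup.mem_normalizer_iff.mpr fun h => ⟨fun hh => hB h hh, fun hh => ?_⟩
    have h2 := hB' _ hh
    rwa [show b⁻¹ * (b * h * b⁻¹) * b⁻¹⁻¹ = h by group] at h2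
  have hnorm_mem : ∀ j : Fin 3, PresentedGroup.of (rels := rels) j ∈ Subgroup.normalizer (N : Set (PresentedGroup rels)) := by
    intro j
    fin_cases j
    · exact hna
    · exact hnb
    · show PresentedGroup.of (rels := rels) 2 ∈ Subgroup.normalizer (N : Set (PresentedGroup rels))
      rw [hc2]
      exact inv_mem (mul_mem hna hnb)
  have hNormal : N.Normal := by
    constructor
    intro n hn g
    exact (Subgroup.mem_normalizer_iff.mp
      (PresentedGroup.generated_by rels (Subgroup.normalizer (N : Set (PresentedGroup rels))) hnorm_mem g) n).mp hn
  -- abelian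
  have hcomm : ∀ x ∈ N, ∀ y ∈ N, x * y = y * x := by
    intro s hs t ht
    induction hs, ht using Subgroup.closure_induction₂ with
    | mem u v hu hv =>
      rcases hu with rfl | hu
      · rcases hv with rfl | hv
        · rfl
        · rw [Set.mem_singleton_iff] at hv; subst hv; exact comm
      · rw [Set.mem_singleton_iff] at hu; subst hu
        rcases hv with rfl | hv
        · exact comm.symm
        · rw [Set.mem_singleton_iff] at hv; subst hv; rfl
    | one_left u hu => exact (Commute.one_left u :)
    | one_right u hu => exact (Commute.one_right u :)
    | mul_left u v w hu hv hw ih1 ih2 => exact (Commute.mul_left (ih1 :) (ih2 :) :)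
    | mul_right u v w hu hv hw ih1 ih2 => exact (Commute.mul_right (ih1 :) (ih2 :) :)
    | inv_left u v hu hv ih => exact (Commute.inv_left (ih :) :)
    | inv_right u v hu hv ih => exact (Commute.inv_right (ih :) :)
  -- the homomorphism
  have hf : ∀ r ∈ rels, FreeGroup.lift (fun _ : Fin 3 =>
      Multiplicative.ofAdd (1 : ZMod 3)) r = 1 := by
    intro r hr
    simp only [rels, Set.mem_insert_iff, Set.mem_singleton_iff] at hr
    rcases hr with rfl | rfl | rfl | rfl <;>
      simp only [map_pow, map_mul, FreeGroup.lift_apply_of] <;> decide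
  set φ : PresentedGroup rels →* Multiplicative (ZMod 3) := PresentedGroup.toGroup hf with hφ
  have hφa : φ a = Multiplicative.ofAdd (1 : ZMod 3) := PresentedGroup.toGroup.of hf
  have hφb : φ b = Multiplicative.ofAdd (1 : ZMod 3) := PresentedGroup.toGroup.of hf
  have hsurj : Function.Surjective φ := by
    intro m
    refine ⟨a ^ (Multiplicative.toAdd m).val, ?_⟩
    rw [map_pow, hφa, ← ofAdd_nsmul]
    simp [nsmul_eq_mul, ZMod.natCast_val, ZMod.cast_id]
  have hker_ge : N ≤ φ.ker := by
    refine (Subgroup.closure_le _).mpr ?_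
    rintro z (rfl | hz)
    · simp [MonoidHom.mem_ker, hφa, hφb]
    · rw [Set.mem_singleton_iff] at hz
      subst hz
      simp [MonoidHom.mem_ker, hφa, hφb]
  have htop2 : Subgroup.zpowers a ⊔ N = ⊤ := by
    rw [eq_top_iff]
    intro g _
    refine PresentedGroup.generated_by rels _ (fun j => ?_) g
    fin_cases j
    · exact Subgroup.mem_sup_left (Subgroup.mem_zpowers a)
    · show b ∈ _
      rw [show b = a * (a⁻¹ * b) by group]
      exact mul_mem (Subgroup.mem_sup_left (Subgroup.mem_zpowers a))
        (Subgroup.mem_sup_right hy)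
    · show PresentedGroup.of (rels := rels) 2 ∈ _
      rw [hc2, show (a * b)⁻¹ = (a * (a * (a⁻¹ * b)))⁻¹ by group]
      exact inv_mem (mul_mem (Subgroup.mem_sup_left (Subgroup.mem_zpowers a))
        (mul_mem (Subgroup.mem_sup_left (Subgroup.mem_zpowers a))
          (Subgroup.mem_sup_right hy)))
  have hker_le : φ.ker ≤ N := by
    haveI := hNormal
    intro g hg
    have hgtop : g ∈ Subgroup.zpowers a ⊔ N := htop2 ▸ Subgroup.mem_top g
    rw [← SetLike.mem_coe, Subgroup.mul_normal] at hgtop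
    obtain ⟨h, hh, n, hn, rfl⟩ := hgtop
    obtain ⟨k, rfl⟩ := hh
    show a ^ k * n ∈ N
    have hn1 : φ n = 1 := hker_ge hn
    rw [MonoidHom.mem_ker] at hg
    have hg' : φ (a ^ k * n) = 1 := hg
    rw [map_mul, hn1, mul_one, map_zpow, hφa, ← ofAdd_zsmul] at hg'
    have hk0 : ((k : ZMod 3)) = 0 := by
      have := ofAdd_eq_one.mp hg'
      simpa [zsmul_eq_mul] using this
    obtain ⟨mq, hkq⟩ := (ZMod.intCast_zmod_eq_zero_iff_dvd k 3).mp hk0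
    have e : a ^ k = 1 := by
      rw [hkq, zpow_mul, show a ^ ((3 : ℕ) : ℤ) = 1 by rw [zpow_natCast, ha], one_zpow]
    rw [e, one_mul]
    exact hn
  exact ⟨hNormal, hcomm, φ, hsurj, le_antisymm hker_le hker_ge⟩
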